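/- Let K be a field, g = ⊕_{n∈ℤ} g_n a ℤ-graded Lie algebra over K, W = ⊕_{k∈ℤ} W_k a nonzero ℤ-graded K-vector space, ρ : g → End_K(W) a linear map such that ρ(x)(W_k) ⊆ W_{k+m} for every x ∈ g_m and every k ∈ ℤ, and γ : g × g → K a bilinear map such that [ρ(x), ρ(y)] = ρ([x,y]) + γ(x,y)·id_W for all x, y ∈ g. Then γ(x, y) = 0 for all homogeneous x ∈ g_m, y ∈ g_n with m + n ≠ 0. -/

import Mathlib

/-- Let `K` be a field, `g = ⊕_{n∈ℤ} g_n` a `ℤ`-graded Lie algebra over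
`K`, `W = ⊕_{k∈ℤ} W_k` a nonzero `ℤ`-graded `K`-vector space, `ρ : g → End_K(W)` a
linear map with `ρ(x)(W_k) ⊆ W_{k+m}` for `x ∈ g_m`, and `γ : g × g → K` bilinear
with `[ρ(x), ρ(y)] = ρ([x,y]) + γ(x,y)·id_W`.  Then `γ(x, y) = 0` for all homogeneous
`x ∈ g_m`, `y ∈ g_n` with `m + n ≠ 0`. -/
theorem stmt9 {K : Type*} [Field K] {W : Type*} [AddCommGroup W] [Module K W]
    [Nontrivial W]
    {g : Type*} [LieRing g] [LieAlgebra K g]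
    (G : ℤ → Submodule K g) (hG : DirectSum.IsInternal G)
    (hGbr : ∀ (m n : ℤ), ∀ x ∈ G m, ∀ y ∈ G n, ⁅x, y⁆ ∈ G (m + n))
    (Wg : ℤ → Submodule K W) (hWg : DirectSum.IsInternal Wg)
    (ρ : g →ₗ[K] Module.End K W)
    (hρ : ∀ (m : ℤ), ∀ x ∈ G m, ∀ (k : ℤ), ∀ w ∈ Wg k, ρ x w ∈ Wg (k + m))
    (γ : g →ₗ[K] g →ₗ[K] K)
    (h : ∀ x y : g,
      ρ x * ρ y - ρ y * ρ x = ρ ⁅x, y⁆ + γ x y • (1 : Module.End K W)) :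
    ∀ (m n : ℤ), m + n ≠ 0 → ∀ x ∈ G m, ∀ y ∈ G n, γ x y = 0 := by
  intro m n hmn x hx y hy
  -- find a nonzero homogeneous vector
  obtain ⟨k, w, hw, hw0⟩ : ∃ k : ℤ, ∃ w ∈ Wg k, w ≠ 0 := by
    by_contra hc
    push_neg at hc
    have : ∀ k, Wg k = ⊥ := by
      intro k
      ext v
      simp only [Submodule.mem_bot]
      exact ⟨fun hv => hc k v hv, fun hv => hv ▸ (Wg k).zero_mem⟩
    have htop := hWg.submodule_iSup_eq_top
    have hbt : (⊥ : Submodule K W) = ⊤ := by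
      rw [← htop]
      exact le_antisymm bot_le (iSup_le fun k => (this k).le)
    exact absurd hbt bot_ne_top
  have hbr : (ρ x * ρ y - ρ y * ρ x) w - ρ ⁅x, y⁆ w ∈ Wg (k + (m + n)) := by
    have h1 : ρ x (ρ y w) ∈ Wg (k + n + m) := hρ m x hx _ _ (hρ n y hy k w hw)
    have h2 : ρ y (ρ x w) ∈ Wg (k + m + n) := hρ n y hy _ _ (hρ m x hx k w hw)
    have e1 : k + n + m = k + (m + n) := by ring
    have e2 : k + m + n = k + (m + n) := by ring
    rw [e1] at h1; rw [e2] at h2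
    have h3 : ρ ⁅x, y⁆ w ∈ Wg (k + (m + n)) := hρ (m + n) _ (hGbr m n x hx y hy) k w hw
    exact Submodule.sub_mem _ (Submodule.sub_mem _ h1 h2) h3
  have key : γ x y • w ∈ Wg (k + (m + n)) := by
    have := h x y
    have hcalc : (ρ x * ρ y - ρ y * ρ x) w - ρ ⁅x, y⁆ w = γ x y • w := by
      rw [this]
      simp [Module.End.mul_apply]
    rwa [hcalc] at hbr
  have hdisj : Disjoint (Wg k) (Wg (k + (m + n))) := by
    exact hWg.submodule_iSupIndep.pairwiseDisjoint (show k ≠ k + (m + n) by omega)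
  have hz : γ x y • w = 0 := by
    have hmem : γ x y • w ∈ Wg k := (Wg k).smul_mem _ hw
    exact (Submodule.disjoint_def.mp hdisj) _ hmem key
  rcases smul_eq_zero.mp hz with h0 | h0
  · exact h0
  · exact absurd h0 hw0
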